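/- Let X be a discrete log-concave random variable with finite expectation such that E[X] is an integer. Then P(X ≤ E[X]) ≥ 1/e. -/

import Mathlib

set_option maxHeartbeats 1000000

open MeasureTheory
open scoped ENNReal NNReal


private lemma seq_lemma (G : ℤ → ℝ) (m : ℤ) (V : ℝ)
    (hG0 : ∀ k, 0 ≤ G k) (hGmono : Monotone G)
    (hlcG : ∀ k : ℤ, G (k - 1) * G (k + 1) ≤ G k ^ 2)
    (hsum : Summable fun j : ℕ => G (m - 1 - j))
    (hV : V = ∑' j : ℕ, G (m - 1 - j))
    (hup : ∀ n : ℕ, ∑ k ∈ Finset.range n, (1 - G (m + k)) ≤ V) :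
    Real.exp (-1) ≤ G m := by
  by_contra hcon
  push_neg at hcon
  -- downward ratio chain
  have F6 : ∀ n : ℤ, n ≤ m → G (n - 1) * G m ≤ G n * G (m - 1) := by
    intro n
    refine Int.le_induction_down (motive := fun n _ => G (n - 1) * G m ≤ G n * G (m - 1)) (le_of_eq (mul_comm _ _)) ?_ n
    intro n hn ih
    rcases eq_or_lt_of_le (hG0 n) with h0 | h0
    · have e1 : G (n - 1 - 1) = 0 :=
        le_antisymm (h0 ▸ hGmono (by omega : n - 1 - 1 ≤ n)) (hG0 _)
      rw [e1, zero_mul]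
      exact mul_nonneg (hG0 _) (hG0 _)
    · have hlc := hlcG (n - 1)
      have e2 : n - 1 + 1 = n := by ring
      rw [e2] at hlc
      have key : (G (n - 1 - 1) * G m) * G n ≤ (G (n - 1) * G (m - 1)) * G n := by
        calc (G (n - 1 - 1) * G m) * G n = (G (n - 1 - 1) * G n) * G m := by ring
          _ ≤ G (n - 1) ^ 2 * G m := by
              exact mul_le_mul_of_nonneg_right hlc (hG0 m)
          _ = G (n - 1) * (G (n - 1) * G m) := by ring
          _ ≤ G (n - 1) * (G n * G (m - 1)) := by
              exact mul_le_mul_of_nonneg_left ih (hG0 _)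
          _ = (G (n - 1) * G (m - 1)) * G n := by ring
      exact le_of_mul_le_mul_right key h0
  -- upward ratio chain
  have F7 : ∀ n : ℤ, m ≤ n → G (n + 1) * G (m - 1) ≤ G n * G m := by
    intro n
    refine Int.le_induction (motive := fun n _ => G (n + 1) * G (m - 1) ≤ G n * G m) (by nlinarith [hlcG m]) ?_ n
    intro n hn ih
    rcases eq_or_lt_of_le (hG0 n) with h0 | h0
    · have e1 : G (m - 1) = 0 :=
        le_antisymm (h0 ▸ hGmono (by omega : m - 1 ≤ n)) (hG0 _)
      rw [e1, mul_zero]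
      exact mul_nonneg (hG0 _) (hG0 _)
    · have hlc := hlcG (n + 1)
      have e2 : n + 1 - 1 = n := by ring
      rw [e2] at hlc
      have key : (G (n + 1 + 1) * G (m - 1)) * G n ≤ (G (n + 1) * G m) * G n := by
        calc (G (n + 1 + 1) * G (m - 1)) * G n = (G n * G (n + 1 + 1)) * G (m - 1) := by ring
          _ ≤ G (n + 1) ^ 2 * G (m - 1) := mul_le_mul_of_nonneg_right hlc (hG0 _)
          _ = G (n + 1) * (G (n + 1) * G (m - 1)) := by ring
          _ ≤ G (n + 1) * (G n * G m) := mul_le_mul_of_nonneg_left ih (hG0 _)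
          _ = (G (n + 1) * G m) * G n := by ring
      exact le_of_mul_le_mul_right key h0
  -- trivial case: G (m-1) = 0
  rcases eq_or_lt_of_le (hG0 (m - 1)) with hA | hA
  · have hz : ∀ j : ℕ, G (m - 1 - j) = 0 := fun j =>
      le_antisymm (hA ▸ hGmono (by omega : m - 1 - (j:ℤ) ≤ m - 1)) (hG0 _)
    have hV0 : V = 0 := by
      rw [hV]
      simp [hz]
    have h1 := hup 1
    rw [hV0] at h1
    simp at h1
    have : Real.exp (-1) < 1 := Real.exp_lt_one_iff.mpr (by norm_num)
    linarith
  · have hq0 : 0 < G m := lt_of_lt_of_le hA (hGmono (by omega : m - 1 ≤ m))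
    have hexp1 : Real.exp (-1) < 1 := Real.exp_lt_one_iff.mpr (by norm_num)
    have hq1 : G m < 1 := lt_trans hcon hexp1
    rcases eq_or_lt_of_le (hGmono (by omega : m - 1 ≤ m)) with hB | hB
    · -- G (m-1) = G m : upper tail never decays, contradiction with finiteness of V
      have hchain : ∀ k : ℕ, G (m + k) ≤ G m := by
        intro k
        induction k with
        | zero => simp
        | succ k ih =>
          have h7 := F7 (m + k) (by omega)
          rw [hB] at h7
          have : G (m + k + 1) ≤ G (m + k) := le_of_mul_le_mul_right h7 hq0
          have e : m + ((k : ℤ) + 1) = m + k + 1 := by ring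
          rw [show ((k+1 : ℕ) : ℤ) = (k : ℤ) + 1 by push_cast; ring, e]
          linarith
      obtain ⟨n, hn⟩ := exists_nat_gt (V / (1 - G m))
      have hlb : (n : ℝ) * (1 - G m) ≤ V := by
        calc (n : ℝ) * (1 - G m) = ∑ k ∈ Finset.range n, (1 - G m) := by
              rw [Finset.sum_const, Finset.card_range]; ring
          _ ≤ ∑ k ∈ Finset.range n, (1 - G (m + k)) :=
              Finset.sum_le_sum fun k _ => by linarith [hchain k]
          _ ≤ V := hup n
      have : V / (1 - G m) < (n : ℝ) := hn
      rw [div_lt_iff₀ (by linarith : (0:ℝ) < 1 - G m)] at this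
      linarith
    · -- main case
      set β : ℝ := G (m - 1) / G m with hβdef
      have hβ0 : 0 < β := div_pos hA hq0
      have hβ1 : β < 1 := (div_lt_one hq0).mpr hB
      have hβm : β * G m = G (m - 1) := div_mul_cancel₀ _ (ne_of_gt hq0)
      have hβne : β ≠ 0 := ne_of_gt hβ0
      -- geometric bounds
      have F8 : ∀ n : ℤ, n ≤ m → G n ≤ G m * β ^ (m - n) := by
        intro n
        refine Int.le_induction_down (motive := fun n _ => G n ≤ G m * β ^ (m - n)) ?_ ?_ n
        · simp
        · intro n hn ih
          have h6 := F6 n hn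
          have key : G (n - 1) * G m ≤ (G m * β ^ (m - n + 1)) * G m := by
            calc G (n - 1) * G m ≤ G n * G (m - 1) := h6
              _ = G n * (β * G m) := by rw [hβm]
              _ ≤ (G m * β ^ (m - n)) * (β * G m) := by
                  apply mul_le_mul_of_nonneg_right ih
                  positivity
              _ = (G m * (β ^ (m - n) * β)) * G m := by ring
              _ = (G m * β ^ (m - n + 1)) * G m := by rw [← zpow_add_one₀ hβne]
          have := le_of_mul_le_mul_right key hq0
          rw [show m - (n - 1) = m - n + 1 by ring]
          exact this
      have F9 : ∀ n : ℤ, m ≤ n → G n ≤ G m * β ^ (m - n) := by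
        intro n
        refine Int.le_induction (motive := fun n _ => G n ≤ G m * β ^ (m - n)) ?_ ?_ n
        · simp
        · intro n hn ih
          have h7 := F7 n hn
          have key : (G (n + 1) * β) * G m ≤ (G m * β ^ (m - n - 1) * β) * G m := by
            calc (G (n + 1) * β) * G m = G (n + 1) * (β * G m) := by ring
              _ = G (n + 1) * G (m - 1) := by rw [hβm]
              _ ≤ G n * G m := h7
              _ ≤ (G m * β ^ (m - n)) * G m := mul_le_mul_of_nonneg_right ih (le_of_lt hq0)
              _ = (G m * β ^ (m - n - 1) * β) * G m := by
                  rw [show (m - n : ℤ) = m - n - 1 + 1 by ring, zpow_add_one₀ hβne]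
                  ring_nf
          have key2 := le_of_mul_le_mul_right key hq0
          have := le_of_mul_le_mul_right key2 hβ0
          rw [show m - (n + 1) = m - n - 1 by ring]
          exact this
      -- bound V
      have boundDown : ∀ j : ℕ, G (m - 1 - j) ≤ G m * (β ^ (j + 1) : ℝ) := by
        intro j
        have := F8 (m - 1 - j) (by omega)
        rw [show m - (m - 1 - (j:ℤ)) = ((j : ℤ) + 1) by ring] at this
        rw [show ((j:ℤ) + 1) = ((j + 1 : ℕ) : ℤ) by push_cast; ring, zpow_natCast] at this
        exact this
      have hgeos : Summable (fun j : ℕ => G m * β ^ (j + 1)) := by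
        apply Summable.mul_left
        exact (summable_geometric_of_lt_one (le_of_lt hβ0) hβ1).comp_injective (add_left_injective 1)
      have hVle : V ≤ G m * β / (1 - β) := by
        rw [hV]
        calc ∑' j : ℕ, G (m - 1 - j) ≤ ∑' j : ℕ, G m * β ^ (j + 1) :=
              hsum.tsum_le_tsum boundDown hgeos
          _ = G m * β * ∑' j : ℕ, β ^ j := by
              rw [← tsum_mul_left]
              congr 1; funext j; rw [pow_succ]; ring
          _ = G m * β * (1 - β)⁻¹ := by rw [tsum_geometric_of_lt_one (le_of_lt hβ0) hβ1]
          _ = G m * β / (1 - β) := by rw [div_eq_mul_inv]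
      have boundUp : ∀ k : ℕ, G (m + k) ≤ G m * (β⁻¹) ^ k := by
        intro k
        have := F9 (m + k) (by omega)
        rw [show m - (m + (k:ℤ)) = -(k:ℤ) by ring] at this
        rw [zpow_neg, ← inv_zpow, zpow_natCast] at this
        exact this
      -- the key inequality (E)
      have hD : (0:ℝ) < 1 - β := by linarith
      have hβinv1 : 1 < β⁻¹ := (one_lt_inv₀ hβ0).mpr hβ1
      set x : ℝ := -Real.log β with hxdef
      have hx : 0 < x := by
        have := Real.log_neg hβ0 hβ1
        simp only [hxdef]; linarith
      have hexpnegx : Real.exp (-x) = β := by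
        rw [hxdef, neg_neg, Real.exp_log hβ0]
      have hexpx : Real.exp x = β⁻¹ := by
        rw [show x = -Real.log β from hxdef, Real.exp_neg, Real.exp_log hβ0]
      set c : ℝ := -Real.log (G m) with hcdef
      have hc1 : 1 < c := by
        have : Real.log (G m) < -1 := by
          have := Real.log_lt_log hq0 hcon
          rwa [Real.log_exp] at this
        simp only [hcdef]; linarith
      have hexpc : Real.exp (-c) = G m := by
        rw [hcdef, neg_neg, Real.exp_log hq0]
      set n : ℕ := ⌈c / x⌉₊ with hndef
      have hcx0 : 0 < c / x := div_pos (by linarith) hx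
      have hn0 : 0 < n := Nat.ceil_pos.mpr hcx0
      have hn0' : (0:ℝ) < n := by exact_mod_cast hn0
      have hnge : c ≤ n * x := by
        have h := Nat.le_ceil (c / x)
        rw [div_le_iff₀ hx] at h
        exact h
      have hnlt : ((n:ℝ) - 1) * x < c := by
        have h := Nat.ceil_lt_add_one (le_of_lt hcx0)
        have h2 : (n:ℝ) - 1 < c / x := by
          simp only [hndef]; linarith
        rw [← lt_div_iff₀ hx]
        linarith
      -- derive (E)
      have hsum_ub : ∑ k ∈ Finset.range n, G (m + k) ≤ G m * ∑ k ∈ Finset.range n, (β⁻¹) ^ k := by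
        rw [Finset.mul_sum]
        exact Finset.sum_le_sum fun k _ => boundUp k
      have h10 : (n:ℝ) - G m * ∑ k ∈ Finset.range n, (β⁻¹) ^ k ≤ V := by
        have e : ∑ k ∈ Finset.range n, (1 - G (m + k))
            = (n:ℝ) - ∑ k ∈ Finset.range n, G (m + k) := by
          rw [Finset.sum_sub_distrib, Finset.sum_const, Finset.card_range, nsmul_eq_mul, mul_one]
        have := hup n
        rw [e] at this
        linarith
      set B : ℝ := (β⁻¹) ^ n with hBdef
      have hgs : ∑ k ∈ Finset.range n, (β⁻¹) ^ k = (B - 1) / (β⁻¹ - 1) :=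
        geom_sum_eq (ne_of_gt hβinv1) n
      have hβinvsub : β⁻¹ - 1 = (1 - β) / β := by field_simp
      have e11 : G m * ((B - 1) / (β⁻¹ - 1)) + G m * β / (1 - β) = G m * β * B / (1 - β) := by
        rw [hβinvsub]
        field_simp
        ring
      have h11 : (n:ℝ) ≤ G m * β * B / (1 - β) := by
        rw [hgs] at h10
        linarith [hVle]
      have hE : (n:ℝ) * (1 - β) ≤ G m * β * B := (le_div_iff₀ hD).mp h11
      have hEB : G m * β * B = Real.exp ((n:ℝ) * x - x - c) := by
        have hBe : B = Real.exp ((n:ℝ) * x) := by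
          rw [hBdef, ← hexpx, ← Real.exp_nat_mul]
        rw [hBe, ← hexpc, ← hexpnegx, ← Real.exp_add, ← Real.exp_add]
        congr 1
        ring
      rw [hEB] at hE
      have hsmall : (n:ℝ) * (1 - β) < 1 := by
        have hlt : (n:ℝ) * x - x - c < 0 := by nlinarith [hnlt]
        calc (n:ℝ) * (1 - β) ≤ Real.exp ((n:ℝ) * x - x - c) := hE
          _ < 1 := Real.exp_lt_one_iff.mpr hlt
      set N : ℝ := (1 - β)⁻¹ with hNdef
      have hN0 : 0 < N := by positivity
      have hNid : N * (1 - β) = 1 := inv_mul_cancel₀ (ne_of_gt hD)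
      have hnN : (n:ℝ) < N := by
        have h' : (n:ℝ) * (1 - β) < N * (1 - β) := by rw [hNid]; exact hsmall
        exact lt_of_mul_lt_mul_right h' (le_of_lt hD)
      have hxn1 : 1 < x * (n:ℝ) := by linarith [hnge, hc1]
      have h3 : N ≤ (n:ℝ) * Real.exp (x * (N - n)) := by
        have ha : N - n ≤ x * (n:ℝ) * (N - n) :=
          le_mul_of_one_le_left (by linarith) (le_of_lt hxn1)
        have hb := Real.add_one_le_exp (x * (N - n))
        have hc' : (n:ℝ) * (x * (N - n) + 1) ≤ (n:ℝ) * Real.exp (x * (N - n)) :=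
          mul_le_mul_of_nonneg_left hb (le_of_lt hn0')
        have e : (n:ℝ) * (x * (N - n) + 1) = n + x * n * (N - n) := by ring
        linarith
      have h4 : N * Real.exp (x * n) ≤ (n:ℝ) * Real.exp (x * N) := by
        have h := mul_le_mul_of_nonneg_right h3 (le_of_lt (Real.exp_pos (x * n)))
        rw [mul_assoc, ← Real.exp_add, show x * (N - n) + x * n = x * N by ring] at h
        exact h
      have h5 : x * N < x + 1 := by
        have hxb : x * β < 1 - β := by
          have h := Real.add_one_lt_exp (ne_of_gt hx)
          rw [hexpx] at h
          have h2 := mul_lt_mul_of_pos_right h hβ0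
          rw [inv_mul_cancel₀ hβne] at h2
          linarith
        have hNb : N - 1 = β * N := by
          have e : N * (1 - β) = N - β * N := by ring
          linarith
        have h2' : x * β * N < (1 - β) * N := mul_lt_mul_of_pos_right hxb hN0
        have h3' : (1 - β) * N = 1 := by linarith [hNid]
        have e2 : x * N = x * (β * N) + x := by
          calc x * N = x * (N - 1) + x := by ring
            _ = x * (β * N) + x := by rw [hNb]
        have e3 : x * (β * N) = x * β * N := by ring
        linarith
      have h6 : Real.exp (x * N) < Real.exp (x + 1) := Real.exp_lt_exp.mpr h5
      have h7 : Real.exp (x * n) < (n:ℝ) * (1 - β) * Real.exp (x + 1) := by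
        have h6' : (n:ℝ) * Real.exp (x * N) < (n:ℝ) * Real.exp (x + 1) :=
          mul_lt_mul_of_pos_left h6 hn0'
        have h8 : N * Real.exp (x * n) < (n:ℝ) * Real.exp (x + 1) := lt_of_le_of_lt h4 h6'
        have h9 : (1 - β) * (N * Real.exp (x * n)) < (1 - β) * ((n:ℝ) * Real.exp (x + 1)) :=
          mul_lt_mul_of_pos_left h8 hD
        calc Real.exp (x * n) = ((1 - β) * N) * Real.exp (x * n) := by
              rw [mul_comm (1 - β) N, hNid, one_mul]
          _ = (1 - β) * (N * Real.exp (x * n)) := by ring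
          _ < (1 - β) * ((n:ℝ) * Real.exp (x + 1)) := h9
          _ = (n:ℝ) * (1 - β) * Real.exp (x + 1) := by ring
      have hfin : Real.exp ((n:ℝ) * x - x - c) < (n:ℝ) * (1 - β) := by
        have e1 : Real.exp ((n:ℝ) * x - x - c)
            = Real.exp (x * n) * Real.exp (-x) * Real.exp (-c) := by
          rw [← Real.exp_add, ← Real.exp_add]
          congr 1
          ring
        have h9 : Real.exp (-c) < Real.exp (-1) := Real.exp_lt_exp.mpr (by linarith)
        have hpos1 : 0 < Real.exp (x * n) * Real.exp (-x) := by positivity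
        calc Real.exp ((n:ℝ) * x - x - c)
            = Real.exp (x * n) * Real.exp (-x) * Real.exp (-c) := e1
          _ < Real.exp (x * n) * Real.exp (-x) * Real.exp (-1) := by
              exact mul_lt_mul_of_pos_left h9 hpos1
          _ < ((n:ℝ) * (1 - β) * Real.exp (x + 1)) * Real.exp (-x) * Real.exp (-1) := by
              apply mul_lt_mul_of_pos_right
              apply mul_lt_mul_of_pos_right h7
              all_goals positivity
          _ = (n:ℝ) * (1 - β) * (Real.exp (x + 1) * Real.exp (-x) * Real.exp (-1)) := by ring
          _ = (n:ℝ) * (1 - β) := by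
              rw [← Real.exp_add, ← Real.exp_add, show x + 1 + -x + -1 = 0 by ring,
                Real.exp_zero, mul_one]
      linarith

/-- If `X` is a discrete log-concave random variable with finite expectation and `E[X]` is
an integer, then `P(X ≤ E[X]) ≥ 1/e`. -/
theorem feige_discrete_log_concave_integer_mean
    {Ω : Type*} [MeasurableSpace Ω] (μ : Measure Ω) [IsProbabilityMeasure μ]
    (X : Ω → ℤ) (hX : Measurable X)
    (hlc : ∀ k : ℤ,
      (μ (X ⁻¹' {k - 1})).toReal * (μ (X ⁻¹' {k + 1})).toReal ≤ (μ (X ⁻¹' {k})).toReal ^ 2)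
    (hsupp : ∀ a b c : ℤ, a ≤ b → b ≤ c →
      0 < (μ (X ⁻¹' {a})).toReal → 0 < (μ (X ⁻¹' {c})).toReal → 0 < (μ (X ⁻¹' {b})).toReal)
    (hint : Integrable (fun ω => (X ω : ℝ)) μ)
    (hmean : ∃ m : ℤ, (∫ ω, (X ω : ℝ) ∂μ) = (m : ℝ)) :
    Real.exp (-1) ≤ (μ {ω | (X ω : ℝ) ≤ ∫ ω, (X ω : ℝ) ∂μ}).toReal := by
  obtain ⟨m, hm⟩ := hmean
  have hset : {ω | (X ω : ℝ) ≤ ∫ ω, (X ω : ℝ) ∂μ} = {ω | X ω ≤ m} := by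
    ext ω
    simp only [Set.mem_setOf_eq, hm, Int.cast_le]
  rw [hset]
  classical
  set p : ℤ → ℝ := fun k => (μ (X ⁻¹' {k})).toReal with hpdef
  set G : ℤ → ℝ := fun k => (μ {ω | X ω ≤ k}).toReal with hGdef
  have hms : ∀ k : ℤ, MeasurableSet {ω | X ω ≤ k} := fun k => hX measurableSet_Iic
  have hm1 : ∀ k : ℤ, MeasurableSet (X ⁻¹' {k}) := fun k => hX (measurableSet_singleton k)
  have hfin : ∀ s : Set Ω, μ s ≠ ⊤ := fun s => measure_ne_top μ s
  have hp0 : ∀ k, 0 ≤ p k := fun k => ENNReal.toReal_nonneg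
  have hG0 : ∀ k, 0 ≤ G k := fun k => ENNReal.toReal_nonneg
  have hGmono : Monotone G := by
    intro a b hab
    exact ENNReal.toReal_mono (hfin _) (measure_mono (fun ω h => le_trans h hab))
  -- F1
  have F1 : ∀ k : ℤ, G (k + 1) = G k + p (k + 1) := by
    intro k
    have hdis : Disjoint {ω | X ω ≤ k} (X ⁻¹' {k + 1}) := by
      rw [Set.disjoint_left]
      intro ω h1 h2
      simp only [Set.mem_setOf_eq] at h1
      simp only [Set.mem_preimage, Set.mem_singleton_iff] at h2
      omega
    have hun : {ω | X ω ≤ k + 1} = {ω | X ω ≤ k} ∪ X ⁻¹' {k + 1} := by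
      ext ω
      simp only [Set.mem_setOf_eq, Set.mem_union, Set.mem_preimage, Set.mem_singleton_iff]
      omega
    simp only [hGdef, hpdef]
    rw [hun, measure_union hdis (hm1 _), ENNReal.toReal_add (hfin _) (hfin _)]
  -- F2 (ENNReal level)
  have F2e : ∀ k : ℤ, μ {ω | X ω ≤ k} = ∑' j : ℕ, μ (X ⁻¹' {k - (j : ℤ)}) := by
    intro k
    have hiU : {ω | X ω ≤ k} = ⋃ j : ℕ, X ⁻¹' {k - (j : ℤ)} := by
      ext ω
      simp only [Set.mem_setOf_eq, Set.mem_iUnion, Set.mem_preimage, Set.mem_singleton_iff]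
      constructor
      · intro h
        refine ⟨(k - X ω).toNat, ?_⟩
        omega
      · rintro ⟨j, hj⟩
        omega
    have hdisj : Pairwise (Function.onFun Disjoint fun j : ℕ => X ⁻¹' {k - (j : ℤ)}) := by
      intro i j hij
      rw [Function.onFun, Set.disjoint_left]
      intro ω h1 h2
      simp only [Set.mem_preimage, Set.mem_singleton_iff] at h1 h2
      omega
    rw [hiU, measure_iUnion hdisj fun j => hm1 _]
  have F2 : ∀ k : ℤ, G k = ∑' j : ℕ, p (k - (j : ℤ)) := by
    intro k
    simp only [hGdef, hpdef]
    rw [F2e k, ENNReal.tsum_toReal_eq fun j => hfin _]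
  have hsummable : ∀ k : ℤ, Summable fun j : ℕ => p (k - (j : ℤ)) := by
    intro k
    have h : (∑' j : ℕ, μ (X ⁻¹' {k - (j : ℤ)})) ≠ ⊤ := by
      rw [← F2e k]; exact hfin _
    exact ENNReal.summable_toReal h
  -- cross inequality
  have cross : ∀ d : ℕ, ∀ i : ℤ, p i * p (i + d + 1) ≤ p (i + 1) * p (i + d) := by
    intro d
    induction d with
    | zero =>
      intro i
      norm_num
      exact le_of_eq (mul_comm _ _)
    | succ d ih =>
      intro i
      have e1 : i + ((d + 1 : ℕ) : ℤ) + 1 = i + d + 2 := by push_cast; ring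
      have e2 : i + ((d + 1 : ℕ) : ℤ) = i + d + 1 := by push_cast; ring
      rw [e1, e2]
      by_cases h1 : p i = 0
      · rw [h1, zero_mul]
        exact mul_nonneg (hp0 _) (hp0 _)
      by_cases h2 : p (i + d + 2) = 0
      · rw [h2, mul_zero]
        exact mul_nonneg (hp0 _) (hp0 _)
      have hpi : 0 < p i := lt_of_le_of_ne (hp0 _) (Ne.symm h1)
      have hp2 : 0 < p (i + d + 2) := lt_of_le_of_ne (hp0 _) (Ne.symm h2)
      have hcc : 0 < p (i + d) := hsupp i (i + d) (i + d + 2) (by omega) (by omega) hpi hp2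
      have hdd : 0 < p (i + d + 1) := hsupp i (i + d + 1) (i + d + 2) (by omega) (by omega) hpi hp2
      have hlc' := hlc (i + (d : ℤ) + 1)
      rw [show i + (d : ℤ) + 1 - 1 = i + d from by ring,
        show i + (d : ℤ) + 1 + 1 = i + d + 2 from by ring] at hlc'
      have ihi := ih i
      have key : (p i * p (i + d + 2)) * (p (i + d) * p (i + d + 1))
          ≤ (p (i + 1) * p (i + d + 1)) * (p (i + d) * p (i + d + 1)) := by
        calc (p i * p (i + d + 2)) * (p (i + d) * p (i + d + 1))
            = (p i * p (i + d + 1)) * (p (i + d) * p (i + d + 2)) := by ring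
          _ ≤ (p (i + 1) * p (i + d)) * (p (i + d + 1) ^ 2) := by
              apply mul_le_mul ihi hlc' (mul_nonneg (hp0 _) (hp0 _))
              exact mul_nonneg (hp0 _) (hp0 _)
          _ = (p (i + 1) * p (i + d + 1)) * (p (i + d) * p (i + d + 1)) := by ring
      exact le_of_mul_le_mul_right key (mul_pos hcc hdd)
  -- G-level cross inequality
  have crossG : ∀ k : ℤ, G (k - 1) * p (k + 1) ≤ G k * p k := by
    intro k
    rw [F2 (k - 1), F2 k, ← tsum_mul_right, ← tsum_mul_right]
    refine ((hsummable (k - 1)).mul_right _).tsum_le_tsum ?_ ((hsummable k).mul_right _)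
    intro j
    have h := cross (j + 1) (k - 1 - j)
    rw [show k - 1 - (j : ℤ) + ((j + 1 : ℕ) : ℤ) + 1 = k + 1 from by push_cast; ring,
      show k - 1 - (j : ℤ) + 1 = k - j from by ring,
      show k - 1 - (j : ℤ) + ((j + 1 : ℕ) : ℤ) = k from by push_cast; ring] at h
    exact h
  -- log-concavity of G
  have hlcG : ∀ k : ℤ, G (k - 1) * G (k + 1) ≤ G k ^ 2 := by
    intro k
    have f1 := F1 k
    have f1' := F1 (k - 1)
    rw [show k - 1 + 1 = k from by ring] at f1'
    calc G (k - 1) * G (k + 1) = G (k - 1) * G k + G (k - 1) * p (k + 1) := by rw [f1]; ring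
      _ ≤ G (k - 1) * G k + G k * p k := by linarith [crossG k]
      _ = G k * (G (k - 1) + p k) := by ring
      _ = G k ^ 2 := by rw [← f1']; ring
  -- positive and negative parts
  set Zp : Ω → ℝ := fun ω => max ((X ω : ℝ) - m) 0 with hZpdef
  set Zm : Ω → ℝ := fun ω => max ((m : ℝ) - X ω) 0 with hZmdef
  have hintm : Integrable (fun ω => (X ω : ℝ) - m) μ := hint.sub (integrable_const _)
  have hZp : Integrable Zp μ := hintm.pos_part
  have hZm : Integrable Zm μ := by
    have h := hintm.neg.pos_part
    simp only [Pi.neg_apply, neg_sub] at h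
    exact h
  have hVeq : ∫ ω, Zp ω ∂μ = ∫ ω, Zm ω ∂μ := by
    have hdiff : ∀ ω, Zp ω - Zm ω = (X ω : ℝ) - m := by
      intro ω
      simp only [hZpdef, hZmdef]
      rw [show (m : ℝ) - X ω = -((X ω : ℝ) - m) from by ring]
      exact max_zero_sub_max_neg_zero_eq_self _
    have h1 : ∫ ω, (Zp ω - Zm ω) ∂μ = ∫ ω, ((X ω : ℝ) - m) ∂μ := by
      congr 1
      funext ω
      exact hdiff ω
    rw [integral_sub hZp hZm] at h1
    have h2 : ∫ ω, ((X ω : ℝ) - m) ∂μ = (∫ ω, (X ω : ℝ) ∂μ) - m := by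
      rw [integral_sub hint (integrable_const _), integral_const]
      simp
    rw [h2, hm] at h1
    simp at h1
    linarith
  set V : ℝ := ∫ ω, Zm ω ∂μ with hVdef
  -- upper-tail lower bound
  have hup : ∀ n : ℕ, ∑ k ∈ Finset.range n, (1 - G (m + (k : ℤ))) ≤ V := by
    intro n
    have hmsU : ∀ k : ℕ, MeasurableSet {ω | m + (k : ℤ) + 1 ≤ X ω} := fun k =>
      hX measurableSet_Ici
    have hcompl : ∀ k : ℕ, (1 : ℝ) - G (m + (k : ℤ))
        = (μ {ω | m + (k : ℤ) + 1 ≤ X ω}).toReal := by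
      intro k
      have hseq : {ω | m + (k : ℤ) + 1 ≤ X ω} = {ω | X ω ≤ m + (k : ℤ)}ᶜ := by
        ext ω
        simp only [Set.mem_setOf_eq, Set.mem_compl_iff, not_le]
        omega
      rw [hseq, measure_compl (hms _) (hfin _), measure_univ,
        ENNReal.toReal_sub_of_le prob_le_one ENNReal.one_ne_top, ENNReal.toReal_one]
    set g : Ω → ℝ := fun ω =>
      ∑ k ∈ Finset.range n, Set.indicator {ω | m + (k : ℤ) + 1 ≤ X ω} (fun _ => (1:ℝ)) ω
      with hgdef
    have hgint : Integrable g μ :=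
      integrable_finset_sum _ fun k _ => (integrable_const (1:ℝ)).indicator (hmsU k)
    have hgle : ∀ ω, g ω ≤ Zp ω := by
      intro ω
      set T : ℕ := (X ω - m).toNat with hT
      have hterm : ∀ k ∈ Finset.range n,
          Set.indicator {ω | m + (k : ℤ) + 1 ≤ X ω} (fun _ => (1:ℝ)) ω
            = if k < T then (1:ℝ) else 0 := by
        intro k _
        rw [Set.indicator_apply]
        have hiff : (ω ∈ {ω | m + (k : ℤ) + 1 ≤ X ω}) ↔ k < T := by
          simp only [Set.mem_setOf_eq, hT]
          omega
        simp only [hiff]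
      have hge : g ω = ∑ k ∈ Finset.range n, (if k < T then (1:ℝ) else 0) := by
        rw [hgdef]
        exact Finset.sum_congr rfl hterm
      rw [hge]
      have hfil2 : (Finset.range n).filter (fun k => k < T) = Finset.range (min n T) := by
        ext k
        simp only [Finset.mem_filter, Finset.mem_range, lt_min_iff]
      rw [Finset.sum_boole, hfil2, Finset.card_range]
      have h1 : ((min n T : ℕ) : ℝ) ≤ (T : ℝ) := by
        exact_mod_cast Nat.cast_le.mpr (min_le_right n T)
      refine h1.trans ?_
      simp only [hZpdef]
      rcases le_or_gt (X ω) m with h | h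
      · have hT0 : T = 0 := by omega
        simp [hT0]
      · have hTv : (T : ℤ) = X ω - m := by omega
        have hTr : (T : ℝ) = (X ω : ℝ) - m := by exact_mod_cast hTv
        rw [hTr]
        exact le_max_left _ _
    have hgeq : ∫ ω, g ω ∂μ
        = ∑ k ∈ Finset.range n, (μ {ω | m + (k : ℤ) + 1 ≤ X ω}).toReal := by
      rw [hgdef, integral_finset_sum _ fun k _ => (integrable_const (1:ℝ)).indicator (hmsU k)]
      refine Finset.sum_congr rfl fun k _ => ?_
      rw [integral_indicator_const (1:ℝ) (hmsU k), smul_eq_mul, mul_one]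
      rfl
    calc ∑ k ∈ Finset.range n, (1 - G (m + (k : ℤ)))
        = ∑ k ∈ Finset.range n, (μ {ω | m + (k : ℤ) + 1 ≤ X ω}).toReal :=
          Finset.sum_congr rfl fun k _ => hcompl k
      _ = ∫ ω, g ω ∂μ := hgeq.symm
      _ ≤ ∫ ω, Zp ω ∂μ := integral_mono hgint hZp hgle
      _ = V := hVeq
  -- lower-tail representation of V
  set S : ℕ → Set Ω := fun j => {ω | X ω ≤ m - 1 - (j : ℤ)} with hSdef
  have key : (fun ω => ENNReal.ofReal (Zm ω))
      = fun ω => ∑' j : ℕ, (S j).indicator (fun _ => (1 : ℝ≥0∞)) ω := by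
    funext ω
    rcases le_or_gt m (X ω) with hle | hlt
    · have hz : Zm ω = 0 := by
        simp only [hZmdef]
        apply max_eq_right
        have : (X ω : ℝ) ≥ (m : ℝ) := by exact_mod_cast hle
        linarith
      rw [hz, ENNReal.ofReal_zero]
      symm
      have : ∀ j : ℕ, (S j).indicator (fun _ => (1 : ℝ≥0∞)) ω = 0 := by
        intro j
        apply Set.indicator_of_notMem
        simp only [hSdef, Set.mem_setOf_eq, not_le]
        omega
      simp [this]
    · set T : ℕ := (m - X ω).toNat with hT
      have hTv : (T : ℤ) = m - X ω := by omega
      have hTr : (T : ℝ) = (m : ℝ) - X ω := by exact_mod_cast hTv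
      have hz : Zm ω = T := by
        simp only [hZmdef]
        rw [max_eq_left (by rw [← hTr]; positivity)]
        exact hTr.symm
      rw [hz]
      have hterm : ∀ j : ℕ, (S j).indicator (fun _ => (1 : ℝ≥0∞)) ω
          = if j < T then (1 : ℝ≥0∞) else 0 := by
        intro j
        rw [Set.indicator_apply]
        have hiff : (ω ∈ S j) ↔ j < T := by
          simp only [hSdef, Set.mem_setOf_eq]
          omega
        simp [hiff]
      rw [tsum_congr hterm, tsum_eq_sum (s := Finset.range T)
        (fun j hj => if_neg (by simpa using hj))]
      have : ∀ j ∈ Finset.range T, (if j < T then (1 : ℝ≥0∞) else 0) = 1 := by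
        intro j hj
        rw [if_pos (Finset.mem_range.mp hj)]
      rw [Finset.sum_congr rfl this, Finset.sum_const, Finset.card_range, nsmul_eq_mul, mul_one]
      simp
  have hlint : ∫⁻ ω, ENNReal.ofReal (Zm ω) ∂μ = ∑' j : ℕ, μ (S j) := by
    rw [key, lintegral_tsum fun j => (measurable_const.indicator (hms _)).aemeasurable]
    congr 1
    funext j
    exact lintegral_indicator_one (hms _)
  have hfinsum : (∑' j : ℕ, μ (S j)) ≠ ⊤ := by
    rw [← hlint]
    refine ne_of_lt (lt_of_le_of_lt ?_ hZm.hasFiniteIntegral)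
    apply lintegral_mono
    intro ω
    exact Real.ofReal_le_enorm (Zm ω)
  have hVlint : V = (∑' j : ℕ, μ (S j)).toReal := by
    have h0 : ∫ ω, Zm ω ∂μ = (∫⁻ ω, ENNReal.ofReal (Zm ω) ∂μ).toReal :=
      integral_eq_lintegral_of_nonneg_ae (ae_of_all _ fun ω => le_max_right _ _)
        hZm.aestronglyMeasurable
    rw [hVdef, h0, hlint]
  have hVsum : V = ∑' j : ℕ, G (m - 1 - (j : ℤ)) := by
    rw [hVlint, ENNReal.tsum_toReal_eq fun j => hfin _]
  have hsumG : Summable fun j : ℕ => G (m - 1 - (j : ℤ)) := ENNReal.summable_toReal hfinsum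
  exact seq_lemma G m V hG0 hGmono hlcG hsumG hVsum hup
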